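/- arXiv:1610.00478 — 2 statements merged into one kernel-verified Lean document; each statement's English description precedes it below -/
import Mathlib

section
/- Let a > 0, b ∈ (0, a), D, E ≥ 0 and let x : (0,∞) → [0,∞) satisfy, for some fixed t > 0 and all k ∈ ℕ, x(t/2^k) ≤ x(t/2^{k+1})/2^a + 2^{b(k+1)}·D·t^{-b} + E, and suppose x is bounded on (0,t]. Then x(t) ≤ (2^b/(1 - 2^{b-a}))·D·t^{-b} + E/(1 - 2^{-a}). -/
open Real

theorem dyadic_shift_iteration (a b D E t : ℝ) (x : ℝ → ℝ)
    (ha : 0 < a) (hb0 : 0 < b) (hba : b < a) (hD : 0 ≤ D) (hE : 0 ≤ E) (ht : 0 < t)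
    (hxnonneg : ∀ s : ℝ, 0 < s → 0 ≤ x s)
    (hbdd : ∃ B : ℝ, ∀ s : ℝ, 0 < s → s ≤ t → x s ≤ B)
    (hrec : ∀ k : ℕ, x (t / 2 ^ k) ≤
      x (t / 2 ^ (k + 1)) / 2 ^ a + 2 ^ (b * (k + 1)) * D * t ^ (-b) + E) :
    x t ≤ (2 ^ b / (1 - 2 ^ (b - a))) * D * t ^ (-b) + E / (1 - 2 ^ (-a)) := by
  obtain ⟨B, hB⟩ := hbdd
  have h2 : (1:ℝ) < 2 := one_lt_two
  set r1 : ℝ := 2 ^ (b - a) with hr1def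
  set r2 : ℝ := 2 ^ (-a) with hr2def
  have hr1pos : 0 < r1 := rpow_pos_of_pos two_pos _
  have hr2pos : 0 < r2 := rpow_pos_of_pos two_pos _
  have hr1lt : r1 < 1 := rpow_lt_one_of_one_lt_of_neg h2 (by linarith)
  have hr2lt : r2 < 1 := rpow_lt_one_of_one_lt_of_neg h2 (by linarith)
  have hCpos : 0 ≤ (2:ℝ) ^ b * D * t ^ (-b) := by
    have := rpow_pos_of_pos two_pos b
    have := rpow_pos_of_pos ht (-b)
    positivity
  -- r1^n and r2^n as rpow
  have hr1n : ∀ n : ℕ, r1 ^ n = (2:ℝ) ^ ((b - a) * n) := by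
    intro n
    rw [hr1def, ← rpow_natCast ((2:ℝ) ^ (b - a)) n, ← rpow_mul (by norm_num)]
  have hr2n : ∀ n : ℕ, r2 ^ n = (2:ℝ) ^ ((-a) * n) := by
    intro n
    rw [hr2def, ← rpow_natCast ((2:ℝ) ^ (-a)) n, ← rpow_mul (by norm_num)]
  have key : ∀ n : ℕ, x t ≤ x (t / 2 ^ n) * r2 ^ n
      + (∑ k ∈ Finset.range n, r1 ^ k) * ((2:ℝ) ^ b * D * t ^ (-b))
      + (∑ k ∈ Finset.range n, r2 ^ k) * E := by
    intro n
    induction n with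
    | zero => simp
    | succ n ih =>
      have hx := hrec n
      have hmul : x (t / 2 ^ n) * r2 ^ n ≤
          (x (t / 2 ^ (n + 1)) / 2 ^ a + 2 ^ (b * (n + 1)) * D * t ^ (-b) + E) * r2 ^ n :=
        mul_le_mul_of_nonneg_right hx (by positivity)
      have heq : (x (t / 2 ^ (n + 1)) / 2 ^ a + 2 ^ (b * (n + 1)) * D * t ^ (-b) + E) * r2 ^ n
          = x (t / 2 ^ (n + 1)) * r2 ^ (n + 1) + r1 ^ n * ((2:ℝ) ^ b * D * t ^ (-b))
            + r2 ^ n * E := by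
        have e1 : x (t / 2 ^ (n + 1)) / 2 ^ a * r2 ^ n = x (t / 2 ^ (n + 1)) * r2 ^ (n + 1) := by
          rw [hr2n n, hr2n (n + 1), div_eq_mul_inv, ← rpow_neg (by norm_num : (0:ℝ) ≤ 2),
            mul_assoc, ← rpow_add two_pos]
          push_cast
          ring_nf
        have e2 : (2:ℝ) ^ (b * (n + 1)) * D * t ^ (-b) * r2 ^ n
            = r1 ^ n * ((2:ℝ) ^ b * D * t ^ (-b)) := by
          rw [hr1n n, hr2n n]
          rw [show (2:ℝ) ^ (b * (n + 1)) * D * t ^ (-b) * (2:ℝ) ^ (-a * n)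
              = ((2:ℝ) ^ (b * (n + 1)) * (2:ℝ) ^ (-a * n)) * (D * t ^ (-b)) by ring,
            ← rpow_add two_pos,
            show b * ((n:ℝ) + 1) + -a * n = (b - a) * n + b by ring,
            rpow_add two_pos]
          ring
        rw [add_mul, add_mul, e1, e2]; ring
      rw [heq] at hmul
      calc x t ≤ x (t / 2 ^ n) * r2 ^ n
            + (∑ k ∈ Finset.range n, r1 ^ k) * ((2:ℝ) ^ b * D * t ^ (-b))
            + (∑ k ∈ Finset.range n, r2 ^ k) * E := ih
        _ ≤ (x (t / 2 ^ (n + 1)) * r2 ^ (n + 1) + r1 ^ n * ((2:ℝ) ^ b * D * t ^ (-b))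
              + r2 ^ n * E)
            + (∑ k ∈ Finset.range n, r1 ^ k) * ((2:ℝ) ^ b * D * t ^ (-b))
            + (∑ k ∈ Finset.range n, r2 ^ k) * E := by linarith
        _ = x (t / 2 ^ (n + 1)) * r2 ^ (n + 1)
            + (∑ k ∈ Finset.range (n + 1), r1 ^ k) * ((2:ℝ) ^ b * D * t ^ (-b))
            + (∑ k ∈ Finset.range (n + 1), r2 ^ k) * E := by
          rw [Finset.sum_range_succ, Finset.sum_range_succ]; ring
  -- geometric sum bounds
  have hgeom : ∀ (r : ℝ), 0 < r → r < 1 → ∀ n : ℕ,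
      (∑ k ∈ Finset.range n, r ^ k) ≤ 1 / (1 - r) := by
    intro r hr0 hr1 n
    have h1 : 0 < 1 - r := by linarith
    have hrn : 0 ≤ r ^ n := by positivity
    rw [geom_sum_eq (ne_of_lt hr1) n,
      show (r ^ n - 1) / (r - 1) = (1 - r ^ n) / (1 - r) by rw [← neg_div_neg_eq]; ring_nf]
    gcongr
    linarith
  -- bound with B
  have hBn : ∀ n : ℕ, x t ≤ B * r2 ^ n
      + ((1 / (1 - r1)) * ((2:ℝ) ^ b * D * t ^ (-b)) + (1 / (1 - r2)) * E) := by
    intro n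
    have hpos : (0:ℝ) < t / 2 ^ n := by positivity
    have hle : t / 2 ^ n ≤ t := by
      apply div_le_self ht.le
      exact one_le_pow₀ (by norm_num)
    have h1 := mul_le_mul_of_nonneg_right (hB _ hpos hle) (by positivity : (0:ℝ) ≤ r2 ^ n)
    have h2 := mul_le_mul_of_nonneg_right (hgeom r1 hr1pos hr1lt n) hCpos
    have h3 := mul_le_mul_of_nonneg_right (hgeom r2 hr2pos hr2lt n) hE
    have := key n
    linarith
  -- take the limit
  have htend : Filter.Tendsto (fun n : ℕ => B * r2 ^ n
      + ((1 / (1 - r1)) * ((2:ℝ) ^ b * D * t ^ (-b)) + (1 / (1 - r2)) * E)) Filter.atTop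
      (nhds (0 + ((1 / (1 - r1)) * ((2:ℝ) ^ b * D * t ^ (-b)) + (1 / (1 - r2)) * E))) := by
    exact Filter.Tendsto.add
      (by simpa using (tendsto_pow_atTop_nhds_zero_of_lt_one hr2pos.le hr2lt).const_mul B)
      tendsto_const_nhds
  have hfinal : x t ≤ 0 + ((1 / (1 - r1)) * ((2:ℝ) ^ b * D * t ^ (-b)) + (1 / (1 - r2)) * E) :=
    ge_of_tendsto' htend hBn
  have : (2:ℝ) ^ b / (1 - r1) * D * t ^ (-b) + E / (1 - r2)
      = 0 + ((1 / (1 - r1)) * ((2:ℝ) ^ b * D * t ^ (-b)) + (1 / (1 - r2)) * E) := by ring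
  rw [this]
  exact hfinal
end

section
/- For p ≥ 2 and m > 1, define Φ_p(y) = ∫₀^y |r|^{p/2 - 1}|r+1|^{(m-1)/2} dr for y ∈ ℝ. Then for every R > 1 and all y ∈ [-R, R], one has |Φ_p(y)| ≤ ((R+1)^{(m-1)/2}/p)·|y|^{p/2}·2, and there exists a constant C̃ > 0 depending only on m such that |Φ_p(y)| ≥ (C̃/p^{1 + max(1,(m-1)/2)})·|y|^{p/2}. -/
open Real

/-- `Φ_p(y) = ∫₀^y |r|^{p/2-1} |r+1|^{(m-1)/2} dr`. -/
noncomputable def PhiP (m p y : ℝ) : ℝ :=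
  ∫ r in (0:ℝ)..y, |r| ^ (p / 2 - 1) * |r + 1| ^ ((m - 1) / 2)

lemma phiCont (q c : ℝ) (hq : 0 ≤ q) (hc : 0 ≤ c) :
    Continuous (fun r : ℝ => |r| ^ q * |r + 1| ^ c) :=
  (continuous_abs.rpow_const fun _ => Or.inr hq).mul
    (((continuous_id.add continuous_const).abs).rpow_const fun _ => Or.inr hc)

lemma phiNonneg (q c : ℝ) (x : ℝ) : 0 ≤ |x| ^ q * |x + 1| ^ c :=
  mul_nonneg (Real.rpow_nonneg (abs_nonneg _) _) (Real.rpow_nonneg (abs_nonneg _) _)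

lemma sub_lower {f : ℝ → ℝ} (hf : Continuous f) (hnn : ∀ x, 0 ≤ f x)
    {u a b v L : ℝ} (hua : u ≤ a) (hab : a ≤ b) (hbv : b ≤ v)
    (hL : ∀ x ∈ Set.Icc a b, L ≤ f x) :
    L * (b - a) ≤ ∫ x in u..v, f x := by
  have e1 : (∫ x in u..a, f x) + ∫ x in a..b, f x = ∫ x in u..b, f x :=
    intervalIntegral.integral_add_adjacent_intervals
      (hf.intervalIntegrable u a) (hf.intervalIntegrable a b)
  have e2 : (∫ x in u..b, f x) + ∫ x in b..v, f x = ∫ x in u..v, f x :=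
    intervalIntegral.integral_add_adjacent_intervals
      (hf.intervalIntegrable u b) (hf.intervalIntegrable b v)
  have h2 : L * (b - a) ≤ ∫ x in a..b, f x := by
    have := intervalIntegral.integral_mono_on (μ := MeasureTheory.volume) hab
      intervalIntegrable_const (hf.intervalIntegrable a b) hL
    simpa [intervalIntegral.integral_const, smul_eq_mul, mul_comm] using this
  have h3 : 0 ≤ ∫ x in u..a, f x :=
    intervalIntegral.integral_nonneg hua fun x _ => hnn x
  have h4 : 0 ≤ ∫ x in b..v, f x :=
    intervalIntegral.integral_nonneg hbv (fun x _ => hnn x)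
  linarith

lemma bern (p u q : ℝ) (hp : 2 ≤ p) (hu0 : 0 ≤ u) (hu1 : u < 1) (hq0 : 0 ≤ q) (hqp : q ≤ p / 2) :
    1 - p / 2 * u ≤ (1 - u) ^ q := by
  have h2 : 1 + p / 2 * (-u) ≤ (1 + -u) ^ (p / 2) :=
    one_add_mul_self_le_rpow_one_add (by linarith) (by linarith)
  have h1 : (1 - u) ^ (p / 2) ≤ (1 - u) ^ q :=
    Real.rpow_le_rpow_of_exponent_ge (by linarith) (by linarith) hqp
  calc 1 - p / 2 * u = 1 + p / 2 * (-u) := by ring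
    _ ≤ (1 + -u) ^ (p / 2) := h2
    _ = (1 - u) ^ (p / 2) := by rw [show (1:ℝ) + -u = 1 - u by ring]
    _ ≤ (1 - u) ^ q := h1

lemma eval_abs (q t : ℝ) (hq : 0 ≤ q) (ht : 0 ≤ t) :
    ∫ r in (0:ℝ)..t, |r| ^ q = t ^ (q + 1) / (q + 1) := by
  have h : ∫ r in (0:ℝ)..t, |r| ^ q = ∫ r in (0:ℝ)..t, r ^ q := by
    apply intervalIntegral.integral_congr
    intro x hx
    rw [Set.uIcc_of_le ht] at hx
    simp [abs_of_nonneg hx.1]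
  rw [h, integral_rpow (Or.inl (by linarith)),
    Real.zero_rpow (by positivity : q + 1 ≠ 0), sub_zero]

lemma eval_abs_neg (q t : ℝ) (hq : 0 ≤ q) (ht : 0 ≤ t) :
    ∫ r in (-t)..(0:ℝ), |r| ^ q = t ^ (q + 1) / (q + 1) := by
  have h := intervalIntegral.integral_comp_neg (a := (0:ℝ)) (b := t) (fun r : ℝ => |r| ^ q)
  simp only [neg_zero, abs_neg] at h
  rw [← h]
  exact eval_abs q t hq ht

lemma abs_phi_neg (m p y : ℝ) (hy : y ≤ 0) :
    |PhiP m p y| = ∫ r in y..(0:ℝ), |r| ^ (p / 2 - 1) * |r + 1| ^ ((m - 1) / 2) := by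
  rw [PhiP, intervalIntegral.integral_symm y 0, abs_neg, abs_of_nonneg]
  exact intervalIntegral.integral_nonneg hy fun u _ => phiNonneg _ _ u

lemma abs_phi_pos (m p y : ℝ) (hy : 0 ≤ y) :
    |PhiP m p y| = ∫ r in (0:ℝ)..y, |r| ^ (p / 2 - 1) * |r + 1| ^ ((m - 1) / 2) := by
  rw [PhiP, abs_of_nonneg]
  exact intervalIntegral.integral_nonneg hy fun u _ => phiNonneg _ _ u

set_option maxHeartbeats 1600000 in
lemma upper_bound (m p R y : ℝ) (hm : 1 < m) (hp : 2 ≤ p) (hR : 1 < R) (hy : |y| ≤ R) :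
    |PhiP m p y| ≤ (R + 1) ^ ((m - 1) / 2) / p * |y| ^ (p / 2) * 2 := by
  have hp0 : (0:ℝ) < p := by linarith
  have hc : (0:ℝ) < (m - 1) / 2 := by linarith
  have hq : (0:ℝ) ≤ p / 2 - 1 := by linarith
  have hB : (0:ℝ) ≤ (R + 1) ^ ((m - 1) / 2) := Real.rpow_nonneg (by linarith) _
  rcases le_or_gt 0 y with hy0 | hy0
  · have hyR : y ≤ R := le_trans (le_abs_self y) hy
    rw [abs_phi_pos m p y hy0, abs_of_nonneg hy0]
    have hmono : (∫ r in (0:ℝ)..y, |r| ^ (p / 2 - 1) * |r + 1| ^ ((m - 1) / 2))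
        ≤ ∫ r in (0:ℝ)..y, (R + 1) ^ ((m - 1) / 2) * |r| ^ (p / 2 - 1) := by
      apply intervalIntegral.integral_mono_on (μ := MeasureTheory.volume) hy0
        ((phiCont _ _ hq hc.le).intervalIntegrable _ _)
        ((continuous_const.mul
          (continuous_abs.rpow_const fun _ => Or.inr hq)).intervalIntegrable _ _)
      intro x hx
      show _ ≤ (R + 1) ^ ((m - 1) / 2) * |x| ^ (p / 2 - 1)
      rw [mul_comm ((R + 1) ^ ((m - 1) / 2))]
      apply mul_le_mul_of_nonneg_left _ (Real.rpow_nonneg (abs_nonneg x) _)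
      apply Real.rpow_le_rpow (abs_nonneg _) _ hc.le
      rw [abs_of_nonneg (by linarith [hx.1] : (0:ℝ) ≤ x + 1)]
      linarith [hx.2]
    have hev : (∫ r in (0:ℝ)..y, (R + 1) ^ ((m - 1) / 2) * |r| ^ (p / 2 - 1))
        = (R + 1) ^ ((m - 1) / 2) * (y ^ (p / 2) / (p / 2)) := by
      rw [intervalIntegral.integral_const_mul, eval_abs _ _ hq hy0,
        show p / 2 - 1 + 1 = p / 2 by ring]
    refine le_trans hmono (le_of_eq ?_)
    rw [hev]; field_simp
  · have hy0' : y ≤ 0 := hy0.le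
    have hyR : -y ≤ R := by rw [abs_of_neg hy0] at hy; exact hy
    rw [abs_phi_neg m p y hy0', abs_of_neg hy0]
    have hmono : (∫ r in y..(0:ℝ), |r| ^ (p / 2 - 1) * |r + 1| ^ ((m - 1) / 2))
        ≤ ∫ r in y..(0:ℝ), (R + 1) ^ ((m - 1) / 2) * |r| ^ (p / 2 - 1) := by
      apply intervalIntegral.integral_mono_on (μ := MeasureTheory.volume) hy0'
        ((phiCont _ _ hq hc.le).intervalIntegrable _ _)
        ((continuous_const.mul
          (continuous_abs.rpow_const fun _ => Or.inr hq)).intervalIntegrable _ _)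
      intro x hx
      show _ ≤ (R + 1) ^ ((m - 1) / 2) * |x| ^ (p / 2 - 1)
      rw [mul_comm ((R + 1) ^ ((m - 1) / 2))]
      apply mul_le_mul_of_nonneg_left _ (Real.rpow_nonneg (abs_nonneg x) _)
      apply Real.rpow_le_rpow (abs_nonneg _) _ hc.le
      have h1 : |x| ≤ R := by
        rw [abs_of_nonpos hx.2]; linarith [hx.1]
      calc |x + 1| ≤ |x| + |1| := abs_add_le x 1
        _ ≤ R + 1 := by rw [abs_one]; linarith
    have hev : (∫ r in y..(0:ℝ), (R + 1) ^ ((m - 1) / 2) * |r| ^ (p / 2 - 1))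
        = (R + 1) ^ ((m - 1) / 2) * ((-y) ^ (p / 2) / (p / 2)) := by
      have he := eval_abs_neg (p / 2 - 1) (-y) hq (by linarith)
      simp only [neg_neg] at he
      rw [intervalIntegral.integral_const_mul, he,
        show p / 2 - 1 + 1 = p / 2 by ring]
    refine le_trans hmono (le_of_eq ?_)
    rw [hev]; field_simp

set_option maxHeartbeats 1600000 in
lemma lower_pos (m p y : ℝ) (hm : 1 < m) (hp : 2 ≤ p) (hy0 : 0 < y) :
    1 / (128 * (8:ℝ) ^ ((m - 1) / 2)) / (p * p ^ ((m - 1) / 2)) * y ^ (p / 2)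
      ≤ ∫ r in (0:ℝ)..y, |r| ^ (p / 2 - 1) * |r + 1| ^ ((m - 1) / 2) := by
  have hp0 : (0:ℝ) < p := by linarith
  have hp1 : (1:ℝ) ≤ p := by linarith
  have hc : (0:ℝ) < (m - 1) / 2 := by linarith
  have hq : (0:ℝ) ≤ p / 2 - 1 := by linarith
  obtain ⟨Y, hYdef⟩ : ∃ v : ℝ, v = (8:ℝ) ^ ((m - 1) / 2) := ⟨_, rfl⟩
  obtain ⟨Z, hZdef⟩ : ∃ v : ℝ, v = p ^ ((m - 1) / 2) := ⟨_, rfl⟩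
  rw [← hYdef, ← hZdef]
  have hY1 : 1 ≤ Y := hYdef ▸ Real.one_le_rpow (by norm_num) hc.le
  have hZ1 : 1 ≤ Z := hZdef ▸ Real.one_le_rpow hp1 hc.le
  have hY0 : (0:ℝ) < Y := by linarith
  have hZ0 : (0:ℝ) < Z := by linarith
  obtain ⟨ε, hεdef⟩ : ∃ v : ℝ, v = p⁻¹ := ⟨_, rfl⟩
  have hε0 : 0 < ε := by rw [hεdef]; positivity
  have hpε : p * ε = 1 := by rw [hεdef]; exact mul_inv_cancel₀ hp0.ne'
  have hε2 : ε ≤ 1 / 2 := by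
    rw [hεdef, inv_le_comm₀ (by linarith) (by norm_num)]; norm_num; linarith
  have hbern2 : (3:ℝ) / 4 ≤ (1 - ε / 2) ^ (p / 2 - 1) := by
    have hb := bern p (ε / 2) (p / 2 - 1) hp (by linarith) (by linarith) hq (by linarith)
    have : 1 - p / 2 * (ε / 2) = 3 / 4 := by linear_combination -hpε / 4
    linarith
  have ha0 : 0 ≤ y * (1 - ε / 2) := by nlinarith
  have hab : y * (1 - ε / 2) ≤ y := by nlinarith
  have hL : ∀ x ∈ Set.Icc (y * (1 - ε / 2)) y,
      (y * (1 - ε / 2)) ^ (p / 2 - 1) * (1:ℝ) ^ ((m - 1) / 2)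
        ≤ |x| ^ (p / 2 - 1) * |x + 1| ^ ((m - 1) / 2) := by
    intro x hx
    have hx0 : 0 ≤ x := le_trans ha0 hx.1
    apply mul_le_mul
    · exact Real.rpow_le_rpow ha0 (by rw [abs_of_nonneg hx0]; exact hx.1) hq
    · apply Real.rpow_le_rpow (by norm_num) _ hc.le
      rw [abs_of_nonneg (by linarith)]; linarith
    · exact Real.rpow_nonneg (by norm_num) _
    · exact Real.rpow_nonneg (abs_nonneg x) _
  have hI := sub_lower (phiCont _ _ hq hc.le) (phiNonneg _ _) ha0 hab (le_refl y) hL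
  have hsplit : (y * (1 - ε / 2)) ^ (p / 2 - 1)
      = y ^ (p / 2 - 1) * (1 - ε / 2) ^ (p / 2 - 1) :=
    Real.mul_rpow hy0.le (by linarith)
  have hyq : y ^ (p / 2 - 1) * y = y ^ (p / 2) := by
    rw [← Real.rpow_add_one hy0.ne' (p / 2 - 1)]; norm_num
  have key : 1 / (128 * Y) / (p * Z) ≤ 3 / 8 * ε := by
    rw [div_le_iff₀ (by positivity)]
    rw [show 3 / 8 * ε * (p * Z) = 3 / 8 * Z * (p * ε) by ring, hpε, mul_one]
    have h5 : 1 / (128 * Y) ≤ 1 / 128 :=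
      div_le_div_of_nonneg_left (by norm_num) (by norm_num) (by nlinarith)
    linarith
  calc 1 / (128 * Y) / (p * Z) * y ^ (p / 2)
      ≤ 3 / 8 * ε * y ^ (p / 2) :=
        mul_le_mul_of_nonneg_right key (Real.rpow_nonneg hy0.le _)
    _ ≤ (y * (1 - ε / 2)) ^ (p / 2 - 1) * (1:ℝ) ^ ((m - 1) / 2) * (y - y * (1 - ε / 2)) := by
        rw [hsplit, Real.one_rpow, mul_one,
          show y - y * (1 - ε / 2) = y * (ε / 2) by ring, ← hyq,
          show 3 / 8 * ε * (y ^ (p / 2 - 1) * y)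
            = y ^ (p / 2 - 1) * (3 / 4) * (y * (ε / 2)) by ring]
        have hyqnn : 0 ≤ y ^ (p / 2 - 1) := Real.rpow_nonneg hy0.le _
        exact mul_le_mul_of_nonneg_right (mul_le_mul_of_nonneg_left hbern2 hyqnn)
          (mul_nonneg hy0.le (by linarith))
    _ ≤ _ := hI

set_option maxHeartbeats 1600000 in
lemma lower_neg_small (m p y : ℝ) (hm : 1 < m) (hp : 2 ≤ p) (hy0 : y < 0) (ht12 : -y ≤ 1 / 2) :
    1 / (128 * (8:ℝ) ^ ((m - 1) / 2)) / (p * p ^ ((m - 1) / 2)) * (-y) ^ (p / 2)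
      ≤ ∫ r in y..(0:ℝ), |r| ^ (p / 2 - 1) * |r + 1| ^ ((m - 1) / 2) := by
  have hp0 : (0:ℝ) < p := by linarith
  have hp1 : (1:ℝ) ≤ p := by linarith
  have hc : (0:ℝ) < (m - 1) / 2 := by linarith
  have hq : (0:ℝ) ≤ p / 2 - 1 := by linarith
  obtain ⟨Y, hYdef⟩ : ∃ v : ℝ, v = (8:ℝ) ^ ((m - 1) / 2) := ⟨_, rfl⟩
  obtain ⟨Z, hZdef⟩ : ∃ v : ℝ, v = p ^ ((m - 1) / 2) := ⟨_, rfl⟩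
  rw [← hYdef, ← hZdef]
  have hY1 : 1 ≤ Y := hYdef ▸ Real.one_le_rpow (by norm_num) hc.le
  have hZ1 : 1 ≤ Z := hZdef ▸ Real.one_le_rpow hp1 hc.le
  have hY0 : (0:ℝ) < Y := by linarith
  have hZ0 : (0:ℝ) < Z := by linarith
  obtain ⟨ε, hεdef⟩ : ∃ v : ℝ, v = p⁻¹ := ⟨_, rfl⟩
  have hε0 : 0 < ε := by rw [hεdef]; positivity
  have hpε : p * ε = 1 := by rw [hεdef]; exact mul_inv_cancel₀ hp0.ne'
  have hε2 : ε ≤ 1 / 2 := by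
    rw [hεdef, inv_le_comm₀ (by linarith) (by norm_num)]; norm_num; linarith
  have hbern2 : (3:ℝ) / 4 ≤ (1 - ε / 2) ^ (p / 2 - 1) := by
    have hb := bern p (ε / 2) (p / 2 - 1) hp (by linarith) (by linarith) hq (by linarith)
    have : 1 - p / 2 * (ε / 2) = 3 / 4 := by linear_combination -hpε / 4
    linarith
  obtain ⟨t, htdef⟩ : ∃ v : ℝ, v = -y := ⟨_, rfl⟩
  rw [← htdef]
  have ht0 : 0 < t := by rw [htdef]; linarith
  have hyeq : y = -t := by rw [htdef]; ring
  have htq : t ^ (p / 2 - 1) * t = t ^ (p / 2) := by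
    rw [← Real.rpow_add_one ht0.ne' (p / 2 - 1)]; norm_num
  have htqnn : 0 ≤ t ^ (p / 2 - 1) := Real.rpow_nonneg ht0.le _
  have h8 : ((ε / 8 : ℝ)) ^ ((m - 1) / 2) = Z⁻¹ / Y := by
    rw [Real.div_rpow hε0.le (by norm_num), hεdef, Real.inv_rpow hp0.le, hYdef, hZdef]
  have hZYnn : (0:ℝ) ≤ Z⁻¹ / Y := div_nonneg (inv_nonneg.mpr hZ0.le) hY0.le
  rw [← htdef] at ht12
  obtain ⟨X, hXdef⟩ : ∃ v : ℝ, v = (2:ℝ) ^ ((m - 1) / 2) := ⟨_, rfl⟩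
  have hX1 : 1 ≤ X := hXdef ▸ Real.one_le_rpow (by norm_num) hc.le
  have hX0 : (0:ℝ) < X := by linarith
  have hXY : X ≤ Y := by
    rw [hXdef, hYdef]; exact Real.rpow_le_rpow (by norm_num) (by norm_num) hc.le
  have ha0 : 0 ≤ t * (1 - ε / 2) := by nlinarith
  have hL : ∀ x ∈ Set.Icc (-t) (-(t * (1 - ε / 2))),
      (t * (1 - ε / 2)) ^ (p / 2 - 1) * ((1:ℝ) / 2) ^ ((m - 1) / 2)
        ≤ |x| ^ (p / 2 - 1) * |x + 1| ^ ((m - 1) / 2) := by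
    intro x hx
    have h1 : t * (1 - ε / 2) ≤ |x| := le_trans (by linarith [hx.2]) (neg_le_abs x)
    have h2 : (1:ℝ) / 2 ≤ |x + 1| :=
      le_trans (by linarith [hx.1] : (1:ℝ) / 2 ≤ x + 1) (le_abs_self _)
    exact mul_le_mul (Real.rpow_le_rpow ha0 h1 hq)
      (Real.rpow_le_rpow (by norm_num) h2 hc.le)
      (Real.rpow_nonneg (by norm_num) _) (Real.rpow_nonneg (abs_nonneg x) _)
  have hI := sub_lower (phiCont _ _ hq hc.le) (phiNonneg _ _)
    (by linarith : y ≤ -t) (by nlinarith : -t ≤ -(t * (1 - ε / 2)))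
    (by linarith : -(t * (1 - ε / 2)) ≤ 0) hL
  rw [show -(t * (1 - ε / 2)) - -t = t * (ε / 2) by ring] at hI
  have hsplit : (t * (1 - ε / 2)) ^ (p / 2 - 1)
      = t ^ (p / 2 - 1) * (1 - ε / 2) ^ (p / 2 - 1) :=
    Real.mul_rpow ht0.le (by linarith)
  have hDc : ((1:ℝ) / 2) ^ ((m - 1) / 2) = X⁻¹ := by
    rw [show (1:ℝ) / 2 = 2⁻¹ by norm_num, Real.inv_rpow (by norm_num), hXdef]
  have hXinv0 : (0:ℝ) ≤ X⁻¹ := inv_nonneg.mpr hX0.le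
  have key : 1 / (128 * Y) / (p * Z) ≤ 3 / 8 * ε * X⁻¹ := by
    rw [div_le_iff₀ (by positivity)]
    rw [show 3 / 8 * ε * X⁻¹ * (p * Z) = 3 / 8 * X⁻¹ * Z * (p * ε) by ring, hpε, mul_one]
    have hXYinv : Y⁻¹ ≤ X⁻¹ := by
      apply inv_anti₀ hX0 hXY
    have e2 : 1 / (128 * Y) = Y⁻¹ * (1 / 128) := by
      rw [one_div, mul_inv]; ring
    have hm1 : Y⁻¹ * 1 ≤ X⁻¹ * Z := mul_le_mul hXYinv hZ1 zero_le_one hXinv0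
    have hXZnn : 0 ≤ X⁻¹ * Z := le_trans (by positivity) hm1
    rw [e2]; nlinarith [hm1]
  calc 1 / (128 * Y) / (p * Z) * t ^ (p / 2)
      ≤ 3 / 8 * ε * X⁻¹ * t ^ (p / 2) :=
        mul_le_mul_of_nonneg_right key (Real.rpow_nonneg ht0.le _)
    _ ≤ (t * (1 - ε / 2)) ^ (p / 2 - 1) * ((1:ℝ) / 2) ^ ((m - 1) / 2) * (t * (ε / 2)) := by
        rw [hsplit, hDc, ← htq,
          show 3 / 8 * ε * X⁻¹ * (t ^ (p / 2 - 1) * t)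
            = t ^ (p / 2 - 1) * (3 / 4) * X⁻¹ * (t * (ε / 2)) by ring]
        apply mul_le_mul_of_nonneg_right _ (mul_nonneg ht0.le (by linarith))
        exact mul_le_mul_of_nonneg_right
          (mul_le_mul_of_nonneg_left hbern2 htqnn) hXinv0
    _ ≤ _ := hI

set_option maxHeartbeats 1600000 in
lemma lower_neg_mid (m p y : ℝ) (hm : 1 < m) (hp : 2 ≤ p) (hy0 : y < 0)
    (ht12 : 1 / 2 < -y) (htm : -y ≤ 1 + p⁻¹) :
    1 / (128 * (8:ℝ) ^ ((m - 1) / 2)) / (p * p ^ ((m - 1) / 2)) * (-y) ^ (p / 2)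
      ≤ ∫ r in y..(0:ℝ), |r| ^ (p / 2 - 1) * |r + 1| ^ ((m - 1) / 2) := by
  have hp0 : (0:ℝ) < p := by linarith
  have hp1 : (1:ℝ) ≤ p := by linarith
  have hc : (0:ℝ) < (m - 1) / 2 := by linarith
  have hq : (0:ℝ) ≤ p / 2 - 1 := by linarith
  obtain ⟨Y, hYdef⟩ : ∃ v : ℝ, v = (8:ℝ) ^ ((m - 1) / 2) := ⟨_, rfl⟩
  obtain ⟨Z, hZdef⟩ : ∃ v : ℝ, v = p ^ ((m - 1) / 2) := ⟨_, rfl⟩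
  rw [← hYdef, ← hZdef]
  have hY1 : 1 ≤ Y := hYdef ▸ Real.one_le_rpow (by norm_num) hc.le
  have hZ1 : 1 ≤ Z := hZdef ▸ Real.one_le_rpow hp1 hc.le
  have hY0 : (0:ℝ) < Y := by linarith
  have hZ0 : (0:ℝ) < Z := by linarith
  obtain ⟨ε, hεdef⟩ : ∃ v : ℝ, v = p⁻¹ := ⟨_, rfl⟩
  have hε0 : 0 < ε := by rw [hεdef]; positivity
  have hpε : p * ε = 1 := by rw [hεdef]; exact mul_inv_cancel₀ hp0.ne'
  have hε2 : ε ≤ 1 / 2 := by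
    rw [hεdef, inv_le_comm₀ (by linarith) (by norm_num)]; norm_num; linarith
  have hbern2 : (3:ℝ) / 4 ≤ (1 - ε / 2) ^ (p / 2 - 1) := by
    have hb := bern p (ε / 2) (p / 2 - 1) hp (by linarith) (by linarith) hq (by linarith)
    have : 1 - p / 2 * (ε / 2) = 3 / 4 := by linear_combination -hpε / 4
    linarith
  obtain ⟨t, htdef⟩ : ∃ v : ℝ, v = -y := ⟨_, rfl⟩
  rw [← htdef]
  have ht0 : 0 < t := by rw [htdef]; linarith
  have hyeq : y = -t := by rw [htdef]; ring
  have htq : t ^ (p / 2 - 1) * t = t ^ (p / 2) := by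
    rw [← Real.rpow_add_one ht0.ne' (p / 2 - 1)]; norm_num
  have htqnn : 0 ≤ t ^ (p / 2 - 1) := Real.rpow_nonneg ht0.le _
  have h8 : ((ε / 8 : ℝ)) ^ ((m - 1) / 2) = Z⁻¹ / Y := by
    rw [Real.div_rpow hε0.le (by norm_num), hεdef, Real.inv_rpow hp0.le, hYdef, hZdef]
  have hZYnn : (0:ℝ) ≤ Z⁻¹ / Y := div_nonneg (inv_nonneg.mpr hZ0.le) hY0.le
  rw [← htdef] at ht12 htm
  rw [← hεdef] at htm
  have hbern4 : (1:ℝ) / 4 ≤ (1 - 3 * ε / 2) ^ (p / 2 - 1) := by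
    have hb := bern p (3 * ε / 2) (p / 2 - 1) hp (by linarith) (by linarith) hq (by linarith)
    have : 1 - p / 2 * (3 * ε / 2) = 1 / 4 := by linear_combination -3 * hpε / 4
    linarith
  obtain ⟨s, hsdef⟩ : ∃ v : ℝ, v = min t 1 := ⟨_, rfl⟩
  have hs1 : s ≤ 1 := hsdef ▸ min_le_right _ _
  have hst : s ≤ t := hsdef ▸ min_le_left _ _
  have hs12 : 1 / 2 ≤ s := hsdef ▸ le_min (by linarith) (by norm_num)
  have hsge : t * (1 - ε) ≤ s := by
    rcases le_total t 1 with h | h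
    · rw [hsdef, min_eq_left h]; nlinarith
    · rw [hsdef, min_eq_right h]; nlinarith
  clear hsdef
  have ht2 : t ≤ 2 := by linarith
  have ha0 : 0 ≤ s * (1 - ε / 2) := by nlinarith
  have hD0 : 0 ≤ s * (ε / 4) := by nlinarith
  have hL : ∀ x ∈ Set.Icc (-(s * (1 - ε / 4))) (-(s * (1 - ε / 2))),
      (s * (1 - ε / 2)) ^ (p / 2 - 1) * (s * (ε / 4)) ^ ((m - 1) / 2)
        ≤ |x| ^ (p / 2 - 1) * |x + 1| ^ ((m - 1) / 2) := by
    intro x hx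
    have h1 : s * (1 - ε / 2) ≤ |x| := le_trans (by linarith [hx.2]) (neg_le_abs x)
    have h2 : s * (ε / 4) ≤ |x + 1| := by
      refine le_trans ?_ (le_abs_self _)
      nlinarith [hx.1]
    exact mul_le_mul (Real.rpow_le_rpow ha0 h1 hq)
      (Real.rpow_le_rpow hD0 h2 hc.le)
      (Real.rpow_nonneg hD0 _) (Real.rpow_nonneg (abs_nonneg x) _)
  have hI := sub_lower (phiCont _ _ hq hc.le) (phiNonneg _ _)
    (by nlinarith : y ≤ -(s * (1 - ε / 4)))
    (by nlinarith : -(s * (1 - ε / 4)) ≤ -(s * (1 - ε / 2)))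
    (by nlinarith : -(s * (1 - ε / 2)) ≤ 0) hL
  rw [show -(s * (1 - ε / 2)) - -(s * (1 - ε / 4)) = s * (ε / 4) by ring] at hI
  have haq : t ^ (p / 2 - 1) * (1 / 4) ≤ (s * (1 - ε / 2)) ^ (p / 2 - 1) := by
    have hta : t * (1 - 3 * ε / 2) ≤ s * (1 - ε / 2) := by nlinarith
    have ht30 : 0 ≤ t * (1 - 3 * ε / 2) := by nlinarith
    calc t ^ (p / 2 - 1) * (1 / 4)
        ≤ t ^ (p / 2 - 1) * (1 - 3 * ε / 2) ^ (p / 2 - 1) :=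
          mul_le_mul_of_nonneg_left hbern4 htqnn
      _ = (t * (1 - 3 * ε / 2)) ^ (p / 2 - 1) :=
          (Real.mul_rpow ht0.le (by nlinarith)).symm
      _ ≤ (s * (1 - ε / 2)) ^ (p / 2 - 1) := Real.rpow_le_rpow ht30 hta hq
  have hDc : Z⁻¹ / Y ≤ (s * (ε / 4)) ^ ((m - 1) / 2) := by
    rw [← h8]
    exact Real.rpow_le_rpow (by positivity) (by nlinarith) hc.le
  have key : 1 / (128 * Y) / (p * Z) ≤ ε * Z⁻¹ * Y⁻¹ / 64 := by
    have e : 1 / (128 * Y) / (p * Z) = ε * Z⁻¹ * Y⁻¹ / 128 := by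
      rw [hεdef]; field_simp
    rw [e]
    have : (0:ℝ) ≤ ε * Z⁻¹ * Y⁻¹ := by positivity
    linarith
  calc 1 / (128 * Y) / (p * Z) * t ^ (p / 2)
      ≤ ε * Z⁻¹ * Y⁻¹ / 64 * t ^ (p / 2) :=
        mul_le_mul_of_nonneg_right key (Real.rpow_nonneg ht0.le _)
    _ ≤ t ^ (p / 2 - 1) * (1 / 4) * (Z⁻¹ / Y) * (ε / 8) := by
        rw [← htq,
          show ε * Z⁻¹ * Y⁻¹ / 64 * (t ^ (p / 2 - 1) * t)
            = ε * Z⁻¹ * Y⁻¹ / 64 * t ^ (p / 2 - 1) * t by ring,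
          show t ^ (p / 2 - 1) * (1 / 4) * (Z⁻¹ / Y) * (ε / 8)
            = ε * Z⁻¹ * Y⁻¹ / 64 * t ^ (p / 2 - 1) * 2 by (rw [div_eq_mul_inv]; ring)]
        exact mul_le_mul_of_nonneg_left ht2 (by positivity)
    _ ≤ (s * (1 - ε / 2)) ^ (p / 2 - 1) * (s * (ε / 4)) ^ ((m - 1) / 2) * (s * (ε / 4)) := by
        apply mul_le_mul (mul_le_mul haq hDc hZYnn (Real.rpow_nonneg ha0 _))
          (by nlinarith : ε / 8 ≤ s * (ε / 4)) (by linarith)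
          (mul_nonneg (Real.rpow_nonneg ha0 _) (Real.rpow_nonneg hD0 _))
    _ ≤ _ := hI

set_option maxHeartbeats 1600000 in
lemma lower_neg_large (m p y : ℝ) (hm : 1 < m) (hp : 2 ≤ p) (hy0 : y < 0)
    (htm : 1 + p⁻¹ < -y) :
    1 / (128 * (8:ℝ) ^ ((m - 1) / 2)) / (p * p ^ ((m - 1) / 2)) * (-y) ^ (p / 2)
      ≤ ∫ r in y..(0:ℝ), |r| ^ (p / 2 - 1) * |r + 1| ^ ((m - 1) / 2) := by
  have hp0 : (0:ℝ) < p := by linarith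
  have hp1 : (1:ℝ) ≤ p := by linarith
  have hc : (0:ℝ) < (m - 1) / 2 := by linarith
  have hq : (0:ℝ) ≤ p / 2 - 1 := by linarith
  obtain ⟨Y, hYdef⟩ : ∃ v : ℝ, v = (8:ℝ) ^ ((m - 1) / 2) := ⟨_, rfl⟩
  obtain ⟨Z, hZdef⟩ : ∃ v : ℝ, v = p ^ ((m - 1) / 2) := ⟨_, rfl⟩
  rw [← hYdef, ← hZdef]
  have hY1 : 1 ≤ Y := hYdef ▸ Real.one_le_rpow (by norm_num) hc.le
  have hZ1 : 1 ≤ Z := hZdef ▸ Real.one_le_rpow hp1 hc.le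
  have hY0 : (0:ℝ) < Y := by linarith
  have hZ0 : (0:ℝ) < Z := by linarith
  obtain ⟨ε, hεdef⟩ : ∃ v : ℝ, v = p⁻¹ := ⟨_, rfl⟩
  have hε0 : 0 < ε := by rw [hεdef]; positivity
  have hpε : p * ε = 1 := by rw [hεdef]; exact mul_inv_cancel₀ hp0.ne'
  have hε2 : ε ≤ 1 / 2 := by
    rw [hεdef, inv_le_comm₀ (by linarith) (by norm_num)]; norm_num; linarith
  have hbern2 : (3:ℝ) / 4 ≤ (1 - ε / 2) ^ (p / 2 - 1) := by
    have hb := bern p (ε / 2) (p / 2 - 1) hp (by linarith) (by linarith) hq (by linarith)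
    have : 1 - p / 2 * (ε / 2) = 3 / 4 := by linear_combination -hpε / 4
    linarith
  obtain ⟨t, htdef⟩ : ∃ v : ℝ, v = -y := ⟨_, rfl⟩
  rw [← htdef]
  have ht0 : 0 < t := by rw [htdef]; linarith
  have hyeq : y = -t := by rw [htdef]; ring
  have htq : t ^ (p / 2 - 1) * t = t ^ (p / 2) := by
    rw [← Real.rpow_add_one ht0.ne' (p / 2 - 1)]; norm_num
  have htqnn : 0 ≤ t ^ (p / 2 - 1) := Real.rpow_nonneg ht0.le _
  have h8 : ((ε / 8 : ℝ)) ^ ((m - 1) / 2) = Z⁻¹ / Y := by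
    rw [Real.div_rpow hε0.le (by norm_num), hεdef, Real.inv_rpow hp0.le, hYdef, hZdef]
  have hZYnn : (0:ℝ) ≤ Z⁻¹ / Y := div_nonneg (inv_nonneg.mpr hZ0.le) hY0.le
  rw [← htdef] at htm
  rw [← hεdef] at htm
  obtain ⟨d, hddef⟩ : ∃ v : ℝ, v = min ((t - 1) / 2) (t * (ε / 2)) := ⟨_, rfl⟩
  have hd1 : d ≤ (t - 1) / 2 := hddef ▸ min_le_left _ _
  have hd2 : d ≤ t * (ε / 2) := hddef ▸ min_le_right _ _
  have hd4 : t * (ε / 4) ≤ d := by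
    rw [hddef]; apply le_min
    · nlinarith [mul_nonneg (by linarith : (0:ℝ) ≤ t - (1 + ε))
        (by linarith : (0:ℝ) ≤ 2 - ε)]
    · nlinarith
  clear hddef
  have hd0 : 0 < d := lt_of_lt_of_le (by nlinarith) hd4
  have ha0 : 0 ≤ t - d := by nlinarith
  have ha1 : 1 ≤ t - d := by linarith
  have hD0 : (0:ℝ) ≤ (t - 1) / 2 := by linarith
  have hL : ∀ x ∈ Set.Icc (-t) (-(t - d)),
      (t - d) ^ (p / 2 - 1) * ((t - 1) / 2) ^ ((m - 1) / 2)
        ≤ |x| ^ (p / 2 - 1) * |x + 1| ^ ((m - 1) / 2) := by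
    intro x hx
    have h1 : t - d ≤ |x| := le_trans (by linarith [hx.2]) (neg_le_abs x)
    have h2 : (t - 1) / 2 ≤ |x + 1| :=
      le_trans (by linarith [hx.2] : (t - 1) / 2 ≤ -(x + 1)) (neg_le_abs _)
    exact mul_le_mul (Real.rpow_le_rpow ha0 h1 hq)
      (Real.rpow_le_rpow hD0 h2 hc.le)
      (Real.rpow_nonneg hD0 _) (Real.rpow_nonneg (abs_nonneg x) _)
  have hI := sub_lower (phiCont _ _ hq hc.le) (phiNonneg _ _)
    (by linarith : y ≤ -t) (by linarith : -t ≤ -(t - d))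
    (by linarith : -(t - d) ≤ 0) hL
  rw [show -(t - d) - -t = d by ring] at hI
  have haq : t ^ (p / 2 - 1) * (3 / 4) ≤ (t - d) ^ (p / 2 - 1) := by
    have hta : t * (1 - ε / 2) ≤ t - d := by nlinarith
    have ht30 : 0 ≤ t * (1 - ε / 2) := by nlinarith
    calc t ^ (p / 2 - 1) * (3 / 4)
        ≤ t ^ (p / 2 - 1) * (1 - ε / 2) ^ (p / 2 - 1) :=
          mul_le_mul_of_nonneg_left hbern2 htqnn
      _ = (t * (1 - ε / 2)) ^ (p / 2 - 1) := (Real.mul_rpow ht0.le (by linarith)).symm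
      _ ≤ (t - d) ^ (p / 2 - 1) := Real.rpow_le_rpow ht30 hta hq
  have hDc : Z⁻¹ / Y ≤ ((t - 1) / 2) ^ ((m - 1) / 2) := by
    rw [← h8]
    exact Real.rpow_le_rpow (by positivity) (by nlinarith) hc.le
  have key : 1 / (128 * Y) / (p * Z) ≤ ε * Z⁻¹ * Y⁻¹ * (3 / 16) := by
    have e : 1 / (128 * Y) / (p * Z) = ε * Z⁻¹ * Y⁻¹ / 128 := by
      rw [hεdef]; field_simp
    rw [e]
    have : (0:ℝ) ≤ ε * Z⁻¹ * Y⁻¹ := by positivity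
    linarith
  calc 1 / (128 * Y) / (p * Z) * t ^ (p / 2)
      ≤ ε * Z⁻¹ * Y⁻¹ * (3 / 16) * t ^ (p / 2) :=
        mul_le_mul_of_nonneg_right key (Real.rpow_nonneg ht0.le _)
    _ = t ^ (p / 2 - 1) * (3 / 4) * (Z⁻¹ / Y) * (t * (ε / 4)) := by
        rw [← htq, div_eq_mul_inv]; ring
    _ ≤ (t - d) ^ (p / 2 - 1) * ((t - 1) / 2) ^ ((m - 1) / 2) * d := by
        apply mul_le_mul (mul_le_mul haq hDc hZYnn (Real.rpow_nonneg ha0 _))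
          hd4 (by nlinarith) (mul_nonneg (Real.rpow_nonneg ha0 _) (Real.rpow_nonneg hD0 _))
    _ ≤ _ := hI

set_option maxHeartbeats 1600000 in
theorem PhiP_two_sided_bounds (m : ℝ) (hm : 1 < m) :
    (∀ p : ℝ, 2 ≤ p → ∀ R : ℝ, 1 < R → ∀ y : ℝ, |y| ≤ R →
      |PhiP m p y| ≤ (R + 1) ^ ((m - 1) / 2) / p * |y| ^ (p / 2) * 2) ∧
    (∃ C : ℝ, 0 < C ∧ ∀ p : ℝ, 2 ≤ p → ∀ R : ℝ, 1 < R → ∀ y : ℝ, |y| ≤ R →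
      C / p ^ (1 + max 1 ((m - 1) / 2)) * |y| ^ (p / 2) ≤ |PhiP m p y|) := by
  have hc : (0:ℝ) < (m - 1) / 2 := by linarith
  constructor
  · intro p hp R hR y hy
    exact upper_bound m p R y hm hp hR hy
  · refine ⟨1 / (128 * (8:ℝ) ^ ((m - 1) / 2)), by positivity, ?_⟩
    intro p hp R hR y hy
    have hp0 : (0:ℝ) < p := by linarith
    have hp1 : (1:ℝ) ≤ p := by linarith
    have hZ0 : (0:ℝ) < p ^ ((m - 1) / 2) := Real.rpow_pos_of_pos hp0 _
    have hA0 : 0 < p ^ (1 + max 1 ((m - 1) / 2)) := Real.rpow_pos_of_pos hp0 _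
    have hApZ : p * p ^ ((m - 1) / 2) ≤ p ^ (1 + max 1 ((m - 1) / 2)) := by
      have h1 : p ^ ((1:ℝ) + (m - 1) / 2) ≤ p ^ (1 + max 1 ((m - 1) / 2)) :=
        Real.rpow_le_rpow_of_exponent_le hp1 (by gcongr; exact le_max_right _ _)
      rwa [Real.rpow_add hp0, Real.rpow_one] at h1
    have hCA : 1 / (128 * (8:ℝ) ^ ((m - 1) / 2)) / p ^ (1 + max 1 ((m - 1) / 2))
        ≤ 1 / (128 * (8:ℝ) ^ ((m - 1) / 2)) / (p * p ^ ((m - 1) / 2)) :=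
      div_le_div_of_nonneg_left (by positivity) (by positivity) hApZ
    have step : ∀ z : ℝ, 0 ≤ z →
        1 / (128 * (8:ℝ) ^ ((m - 1) / 2)) / p ^ (1 + max 1 ((m - 1) / 2)) * z
          ≤ 1 / (128 * (8:ℝ) ^ ((m - 1) / 2)) / (p * p ^ ((m - 1) / 2)) * z :=
      fun z hz => mul_le_mul_of_nonneg_right hCA hz
    rcases lt_trichotomy y 0 with hy0 | rfl | hy0
    · rw [abs_of_neg hy0, abs_phi_neg m p y hy0.le]
      refine le_trans (step _ (Real.rpow_nonneg (by linarith) _)) ?_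
      rcases le_or_gt (-y) (1 / 2) with h1 | h1
      · exact lower_neg_small m p y hm hp hy0 h1
      · rcases le_or_gt (-y) (1 + p⁻¹) with h2 | h2
        · exact lower_neg_mid m p y hm hp hy0 h1 h2
        · exact lower_neg_large m p y hm hp hy0 h2
    · rw [abs_zero, Real.zero_rpow (by positivity : p / 2 ≠ 0), mul_zero]
      exact abs_nonneg _
    · rw [abs_of_pos hy0, abs_phi_pos m p y hy0.le]
      refine le_trans (step _ (Real.rpow_nonneg hy0.le _)) ?_
      exact lower_pos m p y hm hp hy0
end
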